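/- Let Γ ⊆ ℝ^{n} × ℝ^{m} be convex, R ⊆ ℝ^{m} compact and convex, G : ℝ^{m} → ℝ^{n} linear, r ∈ ℝ^{m}, and suppose Σ = {(G v, v) : v ∈ R} ⊆ interior(Γ). Let Λ = Γ ∩ (ℝ^{n} × R) and let r* ∈ R be a minimizer of s ↦ ‖s − r‖ over R. Then for every v ∈ R: v is a minimizer of s ↦ ‖s − r‖ over the slice S_v(Λ, G v) = {s : (G v, s) ∈ Λ} if and only if v = r*. -/

import Mathlib

/-- Fixed-point characterization `g(G v) = v ↔ v = r*` from the proof of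
Lemma 4. -/
theorem fg_fixed_point_characterization
    {n m : ℕ}
    (Γ : Set (EuclideanSpace ℝ (Fin n) × EuclideanSpace ℝ (Fin m)))
    (hΓ : Convex ℝ Γ)
    (R : Set (EuclideanSpace ℝ (Fin m)))
    (hRc : IsCompact R) (hRconv : Convex ℝ R)
    (G : EuclideanSpace ℝ (Fin m) →ₗ[ℝ] EuclideanSpace ℝ (Fin n))
    (r : EuclideanSpace ℝ (Fin m))
    (hSigma : {p : EuclideanSpace ℝ (Fin n) × EuclideanSpace ℝ (Fin m) |
            ∃ v ∈ R, p = (G v, v)} ⊆ interior Γ)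
    (Λ : Set (EuclideanSpace ℝ (Fin n) × EuclideanSpace ℝ (Fin m)))
    (hΛ : Λ = Γ ∩ {p | p.2 ∈ R})
    (rstar : EuclideanSpace ℝ (Fin m)) (hrstar : rstar ∈ R)
    (hmin : ∀ s ∈ R, ‖rstar - r‖ ≤ ‖s - r‖) :
    ∀ v ∈ R,
      ((G v, v) ∈ Λ ∧ ∀ s, (G v, s) ∈ Λ → ‖v - r‖ ≤ ‖s - r‖) ↔ v = rstar := by
  intro v hv
  constructor
  · rintro ⟨hmem, hopt⟩
    -- (G v, v) is in the interior of Γ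
    have hint : (G v, v) ∈ interior Γ := hSigma ⟨v, hv, rfl⟩
    obtain ⟨ε, hε, hball⟩ := Metric.mem_nhds_iff.mp (mem_interior_iff_mem_nhds.mp hint)
    by_contra hne
    set b : EuclideanSpace ℝ (Fin m) := rstar - v with hb
    have hbne : b ≠ 0 := sub_ne_zero.mpr (fun h => hne h.symm)
    have hbpos : (0:ℝ) < ‖b‖ := norm_pos_iff.mpr hbne
    set t : ℝ := min (1/2) (ε / (2 * ‖b‖)) with ht
    have ht0 : 0 < t := lt_min (by norm_num) (div_pos hε (by positivity))
    have ht1 : t < 1 := lt_of_le_of_lt (min_le_left _ _) (by norm_num)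
    have htb : t * ‖b‖ < ε := by
      calc t * ‖b‖ ≤ (ε / (2 * ‖b‖)) * ‖b‖ := by
            exact mul_le_mul_of_nonneg_right (min_le_right _ _) (le_of_lt hbpos)
        _ = ε / 2 := by field_simp
        _ < ε := by linarith
    set w : EuclideanSpace ℝ (Fin m) := v + t • b with hw
    -- w ∈ R by convexity
    have hwR : w ∈ R := by
      have := hRconv hv hrstar (by linarith : (0:ℝ) ≤ 1 - t) (le_of_lt ht0) (by ring)
      convert this using 1
      rw [hw, hb]
      module
    -- (G v, w) ∈ Γ via the ball
    have hwΓ : (G v, w) ∈ Γ := by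
      apply hball
      simp only [Metric.mem_ball]
      have : dist (G v, w) (G v, v) = ‖t • b‖ := by
        simp [Prod.dist_eq, dist_eq_norm, hw]
      rw [this, norm_smul, Real.norm_eq_abs, abs_of_pos ht0]
      exact htb
    have hwΛ : (G v, w) ∈ Λ := by
      rw [hΛ]; exact ⟨hwΓ, hwR⟩
    -- key inequalities
    have h1 : ‖v - r‖ ≤ ‖w - r‖ := hopt w hwΛ
    have h2 : ‖rstar - r‖ ≤ ‖v - r‖ := hmin v hv
    set a : EuclideanSpace ℝ (Fin m) := v - r with ha
    have hwr : w - r = a + t • b := by rw [hw, ha]; abel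
    have hrr : rstar - r = a + b := by rw [ha, hb]; abel
    have e1 : ‖a‖^2 ≤ ‖a + t • b‖^2 := by
      rw [← hwr]
      exact pow_le_pow_left₀ (norm_nonneg _) h1 2
    have e2 : ‖a + b‖^2 ≤ ‖a‖^2 := by
      rw [← hrr]
      exact pow_le_pow_left₀ (norm_nonneg _) h2 2
    have exp1 : ‖a + t • b‖^2 = ‖a‖^2 + 2 * (t * inner ℝ a b) + t^2 * ‖b‖^2 := by
      rw [@norm_add_sq_real, real_inner_smul_right, norm_smul, Real.norm_eq_abs]
      rw [mul_pow, sq_abs]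
    have exp2 : ‖a + b‖^2 = ‖a‖^2 + 2 * inner ℝ a b + ‖b‖^2 := by
      rw [@norm_add_sq_real]
    -- from e1 : 0 ≤ 2 t ⟪a,b⟫ + t² ‖b‖², so -t‖b‖² ≤ 2⟪a,b⟫
    -- from e2 : 2⟪a,b⟫ + ‖b‖² ≤ 0
    have i1 : -(t * ‖b‖^2) ≤ 2 * inner ℝ a b := by
      rw [exp1] at e1; nlinarith [ht0]
    have i2 : 2 * (inner ℝ a b : ℝ) ≤ -‖b‖^2 := by
      rw [exp2] at e2; linarith
    nlinarith [i1, i2, mul_pos (show (0:ℝ) < 1 - t by linarith) (pow_pos hbpos 2)]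
  · intro h; subst h
    refine ⟨?_, ?_⟩
    · rw [hΛ]
      exact ⟨interior_subset (hSigma ⟨v, hv, rfl⟩), hv⟩
    · intro s hs
      rw [hΛ] at hs
      exact hmin s hs.2
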